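/- Fix 3 ≤ m ≤ 5 and set r = 9 − m. In ℚ^{r+1} with basis (h, l₁, …, l_r) and symmetric bilinear form determined by (l_i,l_j) = δ_{ij}, (h,l_j) = 0, (h,h) = −1, let L be the lattice {a·h + ∑ c_j l_j : a, c_j ∈ ℤ, c₁ + ⋯ + c_r + 3a = 0}. Then L is contained in the subspace V = h^⊥' spanned by the vectors l̃_j = l_j − (1/3)h, the form restricted to L is positive definite integer-valued, and the index [L^∨ : L] equals m = 9 − r. -/

import Mathlib

/-- The vanishing lattice of a Del Pezzo threefold of degree `m` (`3 ≤ m ≤ 5`):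
it lies in the span of the vectors `l̃_j = l_j - (1/3)h`, the form is positive
definite and integer-valued on it, and its index in the dual lattice is `m = 9 - r`. -/
theorem stmt4 (m : ℕ) (hm : m ∈ ({3, 4, 5} : Set ℕ)) (r : ℕ) (hr : r = 9 - m)
    (B : (ℚ × (Fin r → ℚ)) → (ℚ × (Fin r → ℚ)) → ℚ)
    (hB : ∀ p q, B p q = -(p.1 * q.1) + ∑ j, p.2 j * q.2 j)
    (ltilde : Fin r → ℚ × (Fin r → ℚ))
    (hltilde : ∀ j, ltilde j = (-(1 : ℚ)/3, fun i => if i = j then (1 : ℚ) else 0))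
    (L Ld : AddSubgroup (ℚ × (Fin r → ℚ)))
    (hL : ∀ p, p ∈ L ↔ ∃ (a : ℤ) (c : Fin r → ℤ),
      p = ((a : ℚ), fun j => (c j : ℚ)) ∧ (∑ j, c j) + 3 * a = 0)
    (hLd : ∀ q, q ∈ Ld ↔ q ∈ Submodule.span ℚ (Set.range ltilde) ∧
      ∀ p ∈ L, ∃ n : ℤ, B p q = n) :
    (L : Set (ℚ × (Fin r → ℚ))) ⊆ (Submodule.span ℚ (Set.range ltilde) : Set _) ∧
    (∀ p ∈ L, ∀ q ∈ L, ∃ n : ℤ, B p q = n) ∧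
    (∀ p ∈ L, p ≠ 0 → 0 < B p p) ∧
    L.relIndex Ld = m := by
  have hm' : m = 3 ∨ m = 4 ∨ m = 5 := by simpa using hm
  have h9 : m + r = 9 := by omega
  have hr2 : 2 ≤ r := by omega
  have hmq : (m : ℚ) ≠ 0 := by
    exact_mod_cast Nat.cast_ne_zero.mpr (by omega : m ≠ 0)
  have h9q : (m : ℚ) + (r : ℚ) = 9 := by exact_mod_cast h9
  obtain ⟨i0, hi0⟩ : ∃ i : Fin r, (i : ℕ) = 0 := ⟨⟨0, by omega⟩, rfl⟩
  obtain ⟨i1, hi1⟩ : ∃ i : Fin r, (i : ℕ) = 1 := ⟨⟨1, by omega⟩, rfl⟩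
  have hi01 : i0 ≠ i1 := by
    intro h; rw [h, hi1] at hi0; omega
  -- membership in the span is equivalent to the linear condition on the first coordinate
  have hspan_fst : ∀ q ∈ Submodule.span ℚ (Set.range ltilde),
      q.1 = -(1/3) * ∑ j, q.2 j := by
    intro q hq
    induction hq using Submodule.span_induction with
    | mem x hx =>
      obtain ⟨j, rfl⟩ := hx
      rw [hltilde]
      simp [Finset.sum_ite_eq']
      norm_num
    | zero => simp
    | add x y hx hy ihx ihy =>
      simp only [Prod.fst_add, Prod.snd_add, Pi.add_apply, Finset.sum_add_distrib, ihx, ihy]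
      ring
    | smul a x hx ih =>
      simp only [Prod.smul_fst, Prod.smul_snd, Pi.smul_apply, smul_eq_mul, ← Finset.mul_sum, ih]
      ring
  have hmem_span : ∀ p : ℚ × (Fin r → ℚ), p.1 = -(1/3) * ∑ j, p.2 j →
      p ∈ Submodule.span ℚ (Set.range ltilde) := by
    intro p hp
    have hrepr : p = ∑ j, p.2 j • ltilde j := by
      have h1 : (∑ j, p.2 j • ltilde j).1 = ∑ j, (p.2 j • ltilde j).1 :=
        map_sum (AddMonoidHom.fst ℚ (Fin r → ℚ)) _ _
    
      have h2 : (∑ j, p.2 j • ltilde j).2 = ∑ j, (p.2 j • ltilde j).2 :=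
        map_sum (AddMonoidHom.snd ℚ (Fin r → ℚ)) _ _
      apply Prod.ext
      · rw [h1, hp]
        simp only [hltilde, Prod.smul_fst, smul_eq_mul, ← Finset.sum_mul, Finset.mul_sum]
        ring_nf
        rw [Finset.sum_mul]
      · rw [h2]
        funext i
        rw [Finset.sum_apply]
        simp [hltilde, Finset.sum_ite_eq]
    rw [hrepr]
    exact Submodule.sum_mem _ fun j _ =>
      Submodule.smul_mem _ _ (Submodule.subset_span ⟨j, rfl⟩)
  -- special elements of L
  have hmuL : ∀ j : Fin r, ((0 : ℚ), fun i =>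
      (if i = i0 then (1:ℚ) else 0) - (if i = j then (1:ℚ) else 0)) ∈ L := by
    intro j
    rw [hL]
    refine ⟨0, fun i => (if i = i0 then 1 else 0) - (if i = j then 1 else 0), ?_, ?_⟩
    · apply Prod.ext
      · simp
      · funext i; push_cast; simp
    · simp [Finset.sum_sub_distrib, Finset.sum_ite_eq']
  have hlamL : ((-1 : ℚ), fun i => if i = i0 then (3:ℚ) else 0) ∈ L := by
    rw [hL]
    refine ⟨-1, fun i => if i = i0 then 3 else 0, ?_, ?_⟩
    · apply Prod.ext
      · simp
      · funext i; push_cast; simp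
    · simp [Finset.sum_ite_eq']
  -- data extracted from membership in the dual lattice
  have hLd_data : ∀ q ∈ Ld, ∃ (d : Fin r → ℤ) (z : ℤ),
      (∀ j, q.2 i0 - q.2 j = (d j : ℚ)) ∧ q.1 + 3 * q.2 i0 = (z : ℚ) ∧
      (m : ℚ) * q.2 i0 = ((3 * z - ∑ j, d j : ℤ) : ℚ) := by
    intro q hq
    rw [hLd] at hq
    obtain ⟨hsp, hint⟩ := hq
    have hq1 : q.1 = -(1/3) * ∑ j, q.2 j := hspan_fst q hsp
    have hd : ∀ j : Fin r, ∃ n : ℤ, q.2 i0 - q.2 j = (n : ℚ) := by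
      intro j
      obtain ⟨n, hn⟩ := hint _ (hmuL j)
      refine ⟨n, ?_⟩
      rw [hB] at hn
      simp only [Finset.sum_sub_distrib, sub_mul, ite_mul, one_mul, zero_mul,
        Finset.sum_ite_eq', Finset.mem_univ, if_true] at hn
      linarith [hn]
    choose d hd using hd
    obtain ⟨z, hz⟩ := hint _ hlamL
    rw [hB] at hz
    simp only [ite_mul, zero_mul, Finset.sum_ite_eq', Finset.mem_univ, if_true] at hz
    have hz' : q.1 + 3 * q.2 i0 = (z : ℚ) := by linarith [hz]
    refine ⟨d, z, hd, hz', ?_⟩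
    have hsum : ∑ j, q.2 j = (r : ℚ) * q.2 i0 - ∑ j, (d j : ℚ) := by
      have : ∀ j, q.2 j = q.2 i0 - (d j : ℚ) := fun j => by linarith [hd j]
      rw [Finset.sum_congr rfl fun j _ => this j, Finset.sum_sub_distrib,
        Finset.sum_const, Finset.card_univ, Fintype.card_fin, nsmul_eq_mul]
    push_cast
    have : (m : ℚ) = 9 - (r : ℚ) := by linarith [h9q]
    rw [this]
    linarith [hz', hq1, hsum]
  have keyI : ∀ q : Ld, ∃ n : ℤ, (m : ℚ) * (q : ℚ × (Fin r → ℚ)).2 i0 = (n : ℚ) := by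
    intro q
    obtain ⟨d, z, _, _, h⟩ := hLd_data q q.2
    exact ⟨_, h⟩
  have hnum : ∀ (x : ℚ) (n : ℤ), x = (n : ℚ) → x.num = n := by
    intro x n h; rw [h, Rat.num_intCast]
  let φ : Ld →+ ZMod m :=
    { toFun := fun q => ((((m : ℚ) * (q : ℚ × (Fin r → ℚ)).2 i0).num : ℤ) : ZMod m)
      map_zero' := by simp
      map_add' := by
        intro a b
        obtain ⟨na, hna⟩ := keyI a
        obtain ⟨nb, hnb⟩ := keyI b
        have hab : (m : ℚ) * ((a + b : Ld) : ℚ × (Fin r → ℚ)).2 i0 = ((na + nb : ℤ) : ℚ) := by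
          push_cast
          simp only [AddSubgroup.coe_add, Prod.snd_add, Pi.add_apply, mul_add]
          rw [hna, hnb]
        rw [hab, hna, hnb, Rat.num_intCast, Rat.num_intCast, Rat.num_intCast]
        push_cast
        ring }
  have hφ_apply : ∀ q : Ld, ∀ n : ℤ, (m : ℚ) * (q : ℚ × (Fin r → ℚ)).2 i0 = (n : ℚ) →
      φ q = (n : ZMod m) := by
    intro q n h
    show ((((m : ℚ) * (q : ℚ × (Fin r → ℚ)).2 i0).num : ℤ) : ZMod m) = _
    rw [hnum _ _ h]
  -- the kernel of φ is L
  have hker : φ.ker = L.addSubgroupOf Ld := by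
    ext q
    constructor
    · intro hq
      obtain ⟨d, z, hd, hz, hmzd⟩ := hLd_data q q.2
      have hq0 : φ q = ((3 * z - ∑ j, d j : ℤ) : ZMod m) := hφ_apply q _ hmzd
      have : ((3 * z - ∑ j, d j : ℤ) : ZMod m) = 0 := by
        rw [← hq0]; exact hq
      obtain ⟨k, hk⟩ := (ZMod.intCast_zmod_eq_zero_iff_dvd _ _).mp this
      have hu : (q : ℚ × (Fin r → ℚ)).2 i0 = (k : ℚ) := by
        have h1 : (m : ℚ) * (q : ℚ × (Fin r → ℚ)).2 i0 = (m : ℚ) * (k : ℚ) := by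
          rw [hmzd, hk]; push_cast; ring
        exact mul_left_cancel₀ hmq h1
      show (q : ℚ × (Fin r → ℚ)) ∈ L
      rw [hL]
      refine ⟨z - 3 * k, fun j => k - d j, ?_, ?_⟩
      · apply Prod.ext
        · push_cast
          rw [← hu]; linarith [hz]
        · funext j
          push_cast
          rw [← hu]; linarith [hd j]
      · have hq1 : (q : ℚ × (Fin r → ℚ)).1 =
            -(1/3) * ∑ j, (q : ℚ × (Fin r → ℚ)).2 j := by
          apply hspan_fst
          exact ((hLd _).mp q.2).1
        have hQ : ((∑ j, (k - d j) + 3 * (z - 3 * k) : ℤ) : ℚ) = 0 := by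
          push_cast
          have hsum : ∑ j, ((k : ℚ) - (d j : ℚ)) = ∑ j, (q : ℚ × (Fin r → ℚ)).2 j := by
            apply Finset.sum_congr rfl
            intro j _
            rw [← hu]; linarith [hd j]
          rw [Finset.sum_sub_distrib] at hsum ⊢
          rw [hsum]
          have := hz
          rw [hu] at this
          rw [hq1] at this
          linarith [this]
        exact_mod_cast hQ
    · intro hq
      have hqL : (q : ℚ × (Fin r → ℚ)) ∈ L := hq
      rw [hL] at hqL
      obtain ⟨a, c, hqe, hsum⟩ := hqL
      have : (m : ℚ) * (q : ℚ × (Fin r → ℚ)).2 i0 = ((m * c i0 : ℤ) : ℚ) := by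
        rw [hqe]; push_cast; ring
      show φ q = 0
      rw [hφ_apply q _ this]
      rw [ZMod.intCast_zmod_eq_zero_iff_dvd]
      exact ⟨c i0, by ring⟩
  -- the generator giving surjectivity
  have hgLd : ((-(1/3) * ∑ j, ((1 : ℚ)/m - if j = i1 then 2 else 0),
      fun j => (1 : ℚ)/m - if j = i1 then 2 else 0) : ℚ × (Fin r → ℚ)) ∈ Ld := by
    rw [hLd]
    constructor
    · exact hmem_span _ rfl
    · intro p hp
      rw [hL] at hp
      obtain ⟨a, c, rfl, hsum⟩ := hp
      refine ⟨-a - 2 * c i1, ?_⟩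
      rw [hB]
      have hsumQ : (∑ j, (c j : ℚ)) = -3 * (a : ℚ) := by
        have : ((∑ j, c j : ℤ) : ℚ) = ((-3 * a : ℤ) : ℚ) := by
          exact_mod_cast congrArg (fun x : ℤ => (x : ℚ)) (by linarith [hsum] : (∑ j, c j) = -3 * a)
        push_cast at this
        exact this
      have hS1 : ∑ j : Fin r, ((1:ℚ)/m - if j = i1 then 2 else 0) = (r : ℚ) * (1/m) - 2 := by
        rw [Finset.sum_sub_distrib, Finset.sum_const, Finset.card_univ, Fintype.card_fin,
          nsmul_eq_mul]
        simp [Finset.sum_ite_eq']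
      have hS2 : ∑ j : Fin r, (c j : ℚ) * ((1:ℚ)/m - if j = i1 then 2 else 0)
          = (-3 * (a:ℚ)) * (1/m) - 2 * c i1 := by
        simp only [mul_sub, mul_ite, mul_zero, Finset.sum_sub_distrib, ← Finset.sum_mul, hsumQ,
          Finset.sum_ite_eq', Finset.mem_univ, if_true]
        ring
      show -((a : ℚ) * (-(1/3) * ∑ j : Fin r, ((1:ℚ)/m - if j = i1 then 2 else 0)))
          + ∑ j : Fin r, (c j : ℚ) * ((1:ℚ)/m - if j = i1 then 2 else 0) = _
      rw [hS1, hS2]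
      push_cast
      have hm0 : (m : ℚ) ≠ 0 := hmq
      field_simp
      linear_combination (a:ℚ) * h9q
  have hφ1 : φ ⟨_, hgLd⟩ = ((1 : ℤ) : ZMod m) := by
    apply hφ_apply _ 1
    show (m : ℚ) * ((1:ℚ)/m - if i0 = i1 then 2 else 0) = ((1:ℤ):ℚ)
    rw [if_neg hi01]
    push_cast
    field_simp
    simp
  have hsurj : Function.Surjective φ := by
    intro z
    obtain ⟨k, rfl⟩ := ZMod.intCast_surjective z
    refine ⟨k • ⟨_, hgLd⟩, ?_⟩
    rw [map_zsmul, hφ1]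
    simp [zsmul_eq_mul]
  have hindex : L.relIndex Ld = m := by
    rw [AddSubgroup.relIndex, ← hker, AddSubgroup.index_ker,
      AddMonoidHom.range_eq_top_of_surjective φ hsurj, AddSubgroup.card_top, Nat.card_zmod]
  refine ⟨?_, ?_, ?_, hindex⟩
  · intro p hp
    have hp' : p ∈ L := hp
    rw [hL] at hp'
    obtain ⟨a, c, rfl, hsum⟩ := hp'
    apply hmem_span
    show (a : ℚ) = -(1/3) * ∑ j, (c j : ℚ)
    have : ((∑ j, c j : ℤ) : ℚ) = ((-3 * a : ℤ) : ℚ) := by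
      exact_mod_cast congrArg (fun x : ℤ => (x : ℚ)) (by linarith [hsum] : (∑ j, c j) = -3 * a)
    push_cast at this
    rw [this]
    ring
  · intro p hp q hq
    rw [hL] at hp hq
    obtain ⟨a, c, rfl, _⟩ := hp
    obtain ⟨a', c', rfl, _⟩ := hq
    refine ⟨-(a * a') + ∑ j, c j * c' j, ?_⟩
    rw [hB]
    push_cast
    ring
  · intro p hp hp0
    rw [hL] at hp
    obtain ⟨a, c, rfl, hsum⟩ := hp
    rw [hB]
    have hsumQ : ∑ j, (c j : ℚ) = -3 * (a : ℚ) := by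
      have : ((∑ j, c j : ℤ) : ℚ) = ((-3 * a : ℤ) : ℚ) := by
        exact_mod_cast congrArg (fun x : ℤ => (x : ℚ)) (by linarith [hsum] : (∑ j, c j) = -3 * a)
      push_cast at this
      exact this
    have hsq : ∀ j : Fin r, ((a : ℚ), fun i => ((c i : ℚ))).2 j * ((a : ℚ), fun i => ((c i : ℚ))).2 j = (c j : ℚ)^2 := by
      intro j; simp [sq]
    have hS : ∑ j, ((a : ℚ), fun i => ((c i : ℚ))).2 j * ((a : ℚ), fun i => ((c i : ℚ))).2 j
        = ∑ j, (c j : ℚ)^2 := Finset.sum_congr rfl fun j _ => hsq j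
    rw [hS]
    have hS0 : (0:ℚ) ≤ ∑ j, (c j : ℚ)^2 := Finset.sum_nonneg fun j _ => sq_nonneg _
    by_cases ha : a = 0
    · subst ha
      have hcne : ∃ j, c j ≠ 0 := by
        by_contra h
        push_neg at h
        apply hp0
        apply Prod.ext
        · simp
        · funext j; simp [h j]
      obtain ⟨j, hj⟩ := hcne
      have h1 : (1:ℚ) ≤ (c j : ℚ)^2 := by
        have : (1:ℤ) ≤ (c j)^2 := by
          rcases lt_or_gt_of_ne hj with h | h <;> nlinarith
        exact_mod_cast this
      have h2 : (c j : ℚ)^2 ≤ ∑ i, (c i : ℚ)^2 :=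
        Finset.single_le_sum (fun i _ => sq_nonneg ((c i : ℚ))) (Finset.mem_univ j)
      simp only []
      push_cast
      nlinarith
    · have hcs : (∑ j, (c j : ℚ) * 1)^2 ≤ (∑ j, (c j : ℚ)^2) * ∑ j : Fin r, (1:ℚ)^2 :=
        Finset.sum_mul_sq_le_sq_mul_sq _ _ _
      simp only [mul_one, one_pow, Finset.sum_const, Finset.card_univ, Fintype.card_fin,
        nsmul_eq_mul] at hcs
      rw [hsumQ] at hcs
      have hr6 : (r : ℚ) ≤ 6 := by
        have : r ≤ 6 := by omega
        exact_mod_cast this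
      have ha2 : (0:ℚ) < (a:ℚ)^2 := by
        have : (a:ℚ) ≠ 0 := Int.cast_ne_zero.mpr ha
        positivity
      nlinarith [hcs, hS0, ha2, hr6]
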